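/- Let $\lambda\ne0$, $F(\kappa)=\tfrac14\kappa^4-\tfrac{\lambda^2}2\kappa^2$, and for $E\in(-\lambda^4/4,0)$ let $\kappa_m(E)=\sqrt{\lambda^2-\sqrt{\lambda^4+4E}}$. Then the contribution $\tilde{\mathfrak{L}}_1(E)=\int_{\kappa_m}^{\kappa_m+\varepsilon/2}\frac{d\kappa}{\sqrt{E-F(\kappa)}}$ (for suitable fixed small $\varepsilon>0$) tends to $+\infty$ as $E\uparrow 0$; in particular the period $L(E)=2\int_{\kappa_m(E)}^{\kappa_M(E)}\frac{d\kappa}{\sqrt{E-F(\kappa)}}$ tends to $+\infty$ as $E\uparrow 0$. -/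
import Mathlib


open Filter MeasureTheory Set

section Aux

variable (l E : ℝ)

/-- Collected basic facts. -/
lemma pfacts (hl : l ≠ 0) (hE : E ∈ Set.Ioo (-l ^ 4 / 4) 0) :
    0 < l ^ 4 + 4 * E ∧ Real.sqrt (l ^ 4 + 4 * E) < l ^ 2 ∧
    0 < Real.sqrt (l ^ 2 - Real.sqrt (l ^ 4 + 4 * E)) ∧
    Real.sqrt (l ^ 2 - Real.sqrt (l ^ 4 + 4 * E)) ^ 2 = l ^ 2 - Real.sqrt (l ^ 4 + 4 * E) ∧
    Real.sqrt (l ^ 2 + Real.sqrt (l ^ 4 + 4 * E)) ^ 2 = l ^ 2 + Real.sqrt (l ^ 4 + 4 * E) ∧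
    Real.sqrt (l ^ 2 - Real.sqrt (l ^ 4 + 4 * E)) < Real.sqrt (l ^ 2 + Real.sqrt (l ^ 4 + 4 * E)) ∧
    Real.sqrt (l ^ 2) ≤ Real.sqrt (l ^ 2 + Real.sqrt (l ^ 4 + 4 * E)) ∧
    (∀ x : ℝ, E - (x ^ 4 / 4 - l ^ 2 / 2 * x ^ 2) =
      (Real.sqrt (l ^ 2 + Real.sqrt (l ^ 4 + 4 * E)) ^ 2 - x ^ 2) *
      (x ^ 2 - Real.sqrt (l ^ 2 - Real.sqrt (l ^ 4 + 4 * E)) ^ 2) / 4) := by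
  obtain ⟨h1, h2⟩ := hE
  have hl2 : (0:ℝ) < l ^ 2 := by positivity
  have h4 : 0 < l ^ 4 + 4 * E := by nlinarith
  have hs2 : Real.sqrt (l ^ 4 + 4 * E) ^ 2 = l ^ 4 + 4 * E := Real.sq_sqrt h4.le
  have hslt : Real.sqrt (l ^ 4 + 4 * E) < l ^ 2 :=
    (Real.sqrt_lt' hl2).mpr (by nlinarith)
  have hsnn : 0 ≤ Real.sqrt (l ^ 4 + 4 * E) := Real.sqrt_nonneg _
  have hspos : 0 < Real.sqrt (l ^ 4 + 4 * E) := Real.sqrt_pos.mpr h4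
  have hkm2 : Real.sqrt (l ^ 2 - Real.sqrt (l ^ 4 + 4 * E)) ^ 2
      = l ^ 2 - Real.sqrt (l ^ 4 + 4 * E) := Real.sq_sqrt (by linarith)
  have hkM2 : Real.sqrt (l ^ 2 + Real.sqrt (l ^ 4 + 4 * E)) ^ 2
      = l ^ 2 + Real.sqrt (l ^ 4 + 4 * E) := Real.sq_sqrt (by linarith)
  refine ⟨h4, hslt, Real.sqrt_pos.mpr (by linarith), hkm2, hkM2, ?_, ?_, ?_⟩
  · exact Real.sqrt_lt_sqrt (by linarith) (by linarith)
  · exact Real.sqrt_le_sqrt (by linarith)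
  · intro x
    rw [hkm2, hkM2]
    nlinarith [hs2]

end Aux

open Filter MeasureTheory Set

-- helper: integrability of 1/sqrt(c*(x-a)) type bounds
lemma rpow_int_right (a b : ℝ) :
    IntervalIntegrable (fun x : ℝ => (x - a) ^ (-(1/2) : ℝ)) volume a b := by
  have h := intervalIntegral.intervalIntegrable_rpow' (a := 0) (b := b - a)
      (r := -(1/2)) (by norm_num)
  have h2 := h.comp_sub_right a
  simpa using h2

lemma rpow_int_left (a b : ℝ) :
    IntervalIntegrable (fun x : ℝ => (b - x) ^ (-(1/2) : ℝ)) volume a b := by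
  have h := intervalIntegral.intervalIntegrable_rpow' (a := 0) (b := b - a)
      (r := -(1/2)) (by norm_num)
  have h2 := (h.comp_sub_left b).symm
  simpa using h2

lemma meas_f (l E : ℝ) : Measurable (fun x : ℝ => 1 / Real.sqrt (E - (x ^ 4 / 4 - l ^ 2 / 2 * x ^ 2))) := by
  fun_prop

-- key comparison: on a subinterval, if E - F x ≥ c * (x - a) with c > 0 (for x in Ioc a b),
-- then f is interval integrable on [a,b].
lemma integrable_of_lin_lb (l E a b c : ℝ) (hc : 0 < c) (hab : a ≤ b)
    (h : ∀ x ∈ Set.Ioc a b, c * (x - a) ≤ E - (x ^ 4 / 4 - l ^ 2 / 2 * x ^ 2)) :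
    IntervalIntegrable (fun x : ℝ => 1 / Real.sqrt (E - (x ^ 4 / 4 - l ^ 2 / 2 * x ^ 2)))
      volume a b := by
  have hg : IntervalIntegrable (fun x : ℝ => (Real.sqrt c)⁻¹ * (x - a) ^ (-(1/2) : ℝ)) volume a b :=
    (rpow_int_right a b).const_mul _
  refine hg.mono_fun ((meas_f l E).aestronglyMeasurable.restrict) ?_
  rw [uIoc_of_le hab]
  refine ae_restrict_of_forall_mem measurableSet_Ioc ?_
  intro x hx
  have hxa : 0 < x - a := by linarith [hx.1]
  have hkey := h x hx
  have h1 : 0 < c * (x - a) := by positivity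
  have hrw : (x - a) ^ (-(1/2) : ℝ) = (Real.sqrt (x - a))⁻¹ := by
    rw [Real.rpow_neg hxa.le, Real.sqrt_eq_rpow]
  have hsq : Real.sqrt (c * (x - a)) ≤ Real.sqrt (E - (x ^ 4 / 4 - l ^ 2 / 2 * x ^ 2)) :=
    Real.sqrt_le_sqrt hkey
  have hsqpos : 0 < Real.sqrt (c * (x - a)) := Real.sqrt_pos.mpr h1
  have hle : 1 / Real.sqrt (E - (x ^ 4 / 4 - l ^ 2 / 2 * x ^ 2)) ≤ 1 / Real.sqrt (c * (x - a)) :=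
    one_div_le_one_div_of_le hsqpos hsq
  have hmul : Real.sqrt (c * (x - a)) = Real.sqrt c * Real.sqrt (x - a) :=
    Real.sqrt_mul hc.le _
  simp only [norm_mul, Real.norm_eq_abs]
  rw [abs_of_nonneg (by positivity), abs_of_nonneg (by positivity),
    abs_of_nonneg (by positivity : (0:ℝ) ≤ (x - a) ^ (-(1/2) : ℝ))]
  calc 1 / Real.sqrt (E - (x ^ 4 / 4 - l ^ 2 / 2 * x ^ 2)) ≤ 1 / Real.sqrt (c * (x - a)) := hle
    _ = (Real.sqrt c)⁻¹ * (x - a) ^ (-(1/2) : ℝ) := by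
        rw [hrw, hmul, one_div, mul_inv]

lemma integrable_of_lin_ub (l E a b c : ℝ) (hc : 0 < c) (hab : a ≤ b)
    (h : ∀ x ∈ Set.Ioc a b, c * (b - x) ≤ E - (x ^ 4 / 4 - l ^ 2 / 2 * x ^ 2)) :
    IntervalIntegrable (fun x : ℝ => 1 / Real.sqrt (E - (x ^ 4 / 4 - l ^ 2 / 2 * x ^ 2)))
      volume a b := by
  have hg : IntervalIntegrable (fun x : ℝ => (Real.sqrt c)⁻¹ * (b - x) ^ (-(1/2) : ℝ)) volume a b :=
    (rpow_int_left a b).const_mul _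
  refine hg.mono_fun ((meas_f l E).aestronglyMeasurable.restrict) ?_
  rw [uIoc_of_le hab]
  have hbne : ∀ᵐ x : ℝ ∂(volume.restrict (Set.Ioc a b)), x ≠ b :=
    ae_restrict_of_ae (by
      refine ae_iff.mpr ?_
      simp)
  filter_upwards [hbne, ae_restrict_of_forall_mem measurableSet_Ioc
    (fun x (hx : x ∈ Set.Ioc a b) => hx)] with x hxb' hx
  · have hxb : x < b := lt_of_le_of_ne hx.2 hxb'
    have hxa : 0 < b - x := by linarith
    have hkey := h x hx
    have h1 : 0 < c * (b - x) := by positivity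
    have hrw : (b - x) ^ (-(1/2) : ℝ) = (Real.sqrt (b - x))⁻¹ := by
      rw [Real.rpow_neg hxa.le, Real.sqrt_eq_rpow]
    have hsq : Real.sqrt (c * (b - x)) ≤ Real.sqrt (E - (x ^ 4 / 4 - l ^ 2 / 2 * x ^ 2)) :=
      Real.sqrt_le_sqrt hkey
    have hsqpos : 0 < Real.sqrt (c * (b - x)) := Real.sqrt_pos.mpr h1
    have hle : 1 / Real.sqrt (E - (x ^ 4 / 4 - l ^ 2 / 2 * x ^ 2)) ≤ 1 / Real.sqrt (c * (b - x)) :=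
      one_div_le_one_div_of_le hsqpos hsq
    have hmul : Real.sqrt (c * (b - x)) = Real.sqrt c * Real.sqrt (b - x) :=
      Real.sqrt_mul hc.le _
    simp only [norm_mul, Real.norm_eq_abs]
    rw [abs_of_nonneg (by positivity), abs_of_nonneg (by positivity),
      abs_of_nonneg (by positivity : (0:ℝ) ≤ (b - x) ^ (-(1/2) : ℝ))]
    calc 1 / Real.sqrt (E - (x ^ 4 / 4 - l ^ 2 / 2 * x ^ 2)) ≤ 1 / Real.sqrt (c * (b - x)) := hle
      _ = (Real.sqrt c)⁻¹ * (b - x) ^ (-(1/2) : ℝ) := by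
          rw [hrw, hmul, one_div, mul_inv]

open Filter MeasureTheory Set

set_option maxHeartbeats 800000 in
lemma integrable_full (l E : ℝ) (hl : l ≠ 0) (hE : E ∈ Set.Ioo (-l ^ 4 / 4) 0) :
    IntervalIntegrable (fun x : ℝ => 1 / Real.sqrt (E - (x ^ 4 / 4 - l ^ 2 / 2 * x ^ 2)))
      volume (Real.sqrt (l ^ 2 - Real.sqrt (l ^ 4 + 4 * E)))
      (Real.sqrt (l ^ 2 + Real.sqrt (l ^ 4 + 4 * E))) := by
  obtain ⟨h4, hslt, hp, hp2, hP2, hpP, hsleP, hfac⟩ := pfacts l E hl hE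
  set p := Real.sqrt (l ^ 2 - Real.sqrt (l ^ 4 + 4 * E)) with hpdef
  set P := Real.sqrt (l ^ 2 + Real.sqrt (l ^ 4 + 4 * E)) with hPdef
  set m := (p + P) / 2 with hm
  have hPpos : 0 < P := lt_trans hp hpP
  have hc1 : 0 < p * P * (P - p) / 4 := by
    have : 0 < P - p := by linarith
    positivity
  have hleft : IntervalIntegrable
      (fun x : ℝ => 1 / Real.sqrt (E - (x ^ 4 / 4 - l ^ 2 / 2 * x ^ 2))) volume p m := by
    refine integrable_of_lin_lb l E p m _ hc1 (by simp only [hm]; linarith) ?_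
    intro x hx
    obtain ⟨hx1, hx2⟩ := hx
    have hx0 : 0 < x := lt_trans hp hx1
    have hxP : x < P := by simp only [hm] at hx2; linarith
    rw [hfac x]
    have hxnn : 0 ≤ x * (P - x) := mul_nonneg hx0.le (by linarith)
    have hA : P * (P - x) ≤ P ^ 2 - x ^ 2 := by linarith
    have hB : 2 * p * (x - p) ≤ x ^ 2 - p ^ 2 := by linarith [sq_nonneg (x - p)]
    have hBnn : (0:ℝ) ≤ 2 * p * (x - p) := by
      have : 0 ≤ x - p := by linarith
      positivity
    have hAnn : (0:ℝ) ≤ P * (P - x) := mul_nonneg hPpos.le (by linarith)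
    have hAB : (P * (P - x)) * (2 * p * (x - p)) ≤ (P ^ 2 - x ^ 2) * (x ^ 2 - p ^ 2) :=
      mul_le_mul hA hB hBnn (hAnn.trans hA)
    have hPx : (P - p) / 2 ≤ P - x := by simp only [hm] at hx2; linarith
    have h0 : (0:ℝ) ≤ 2 * p * P * (x - p) := by
      have : 0 ≤ x - p := by linarith
      positivity
    have e1 : p * P * (P - p) * (x - p) ≤ P * (P - x) * (2 * p * (x - p)) := by
      calc p * P * (P - p) * (x - p) = (2 * p * P * (x - p)) * ((P - p) / 2) := by ring
        _ ≤ (2 * p * P * (x - p)) * (P - x) := mul_le_mul_of_nonneg_left hPx h0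
        _ = P * (P - x) * (2 * p * (x - p)) := by ring
    linarith [e1.trans hAB]
  have hright : IntervalIntegrable
      (fun x : ℝ => 1 / Real.sqrt (E - (x ^ 4 / 4 - l ^ 2 / 2 * x ^ 2))) volume m P := by
    refine integrable_of_lin_ub l E m P _ hc1 (by simp only [hm]; linarith) ?_
    intro x hx
    obtain ⟨hx1, hx2⟩ := hx
    have hx1' : p < x := by simp only [hm] at hx1; linarith
    have hx0 : 0 < x := lt_trans hp hx1'
    rw [hfac x]
    have hxnn : 0 ≤ x * (P - x) := mul_nonneg hx0.le (by linarith)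
    have hA : P * (P - x) ≤ P ^ 2 - x ^ 2 := by linarith
    have hB : 2 * p * (x - p) ≤ x ^ 2 - p ^ 2 := by linarith [sq_nonneg (x - p)]
    have hBnn : (0:ℝ) ≤ 2 * p * (x - p) := by
      have : 0 ≤ x - p := by linarith
      positivity
    have hAnn : (0:ℝ) ≤ P * (P - x) := mul_nonneg hPpos.le (by linarith)
    have hAB : (P * (P - x)) * (2 * p * (x - p)) ≤ (P ^ 2 - x ^ 2) * (x ^ 2 - p ^ 2) :=
      mul_le_mul hA hB hBnn (hAnn.trans hA)
    have hPx : (P - p) / 2 ≤ x - p := by simp only [hm] at hx1; linarith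
    have h0 : (0:ℝ) ≤ 2 * p * P * (P - x) := by
      have : 0 ≤ P - x := by linarith
      positivity
    have e1 : p * P * (P - p) * (P - x) ≤ P * (P - x) * (2 * p * (x - p)) := by
      calc p * P * (P - p) * (P - x) = (2 * p * P * (P - x)) * ((P - p) / 2) := by ring
        _ ≤ (2 * p * P * (P - x)) * (x - p) := mul_le_mul_of_nonneg_left hPx h0
        _ = P * (P - x) * (2 * p * (x - p)) := by ring
    linarith [e1.trans hAB]
  exact hleft.trans hright

set_option maxHeartbeats 1000000 in
lemma pbound (l E : ℝ) (hl : l ≠ 0) (hE : E ∈ Set.Ioo (-l ^ 4 / 4) 0)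
    (hsm : Real.sqrt (l ^ 2 - Real.sqrt (l ^ 4 + 4 * E)) < Real.sqrt (l ^ 2) / 2) :
    ((Real.sqrt (l ^ 2 / 2))⁻¹ *
      (Real.log (Real.sqrt (l ^ 2 - Real.sqrt (l ^ 4 + 4 * E)) + Real.sqrt (l ^ 2) / 2) -
        Real.log (Real.sqrt (l ^ 2 - Real.sqrt (l ^ 4 + 4 * E)))) ≤
      ∫ x in (Real.sqrt (l ^ 2 - Real.sqrt (l ^ 4 + 4 * E)))..
          (Real.sqrt (l ^ 2 - Real.sqrt (l ^ 4 + 4 * E)) + Real.sqrt (l ^ 2) / 2),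
        1 / Real.sqrt (E - (x ^ 4 / 4 - l ^ 2 / 2 * x ^ 2))) ∧
    ((Real.sqrt (l ^ 2 / 2))⁻¹ *
      (Real.log (Real.sqrt (l ^ 2 - Real.sqrt (l ^ 4 + 4 * E)) + Real.sqrt (l ^ 2) / 2) -
        Real.log (Real.sqrt (l ^ 2 - Real.sqrt (l ^ 4 + 4 * E)))) ≤
      2 * ∫ x in (Real.sqrt (l ^ 2 - Real.sqrt (l ^ 4 + 4 * E)))..
          (Real.sqrt (l ^ 2 + Real.sqrt (l ^ 4 + 4 * E))),
        1 / Real.sqrt (E - (x ^ 4 / 4 - l ^ 2 / 2 * x ^ 2))) := by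
  obtain ⟨h4, hslt, hp, hp2, hP2, hpP, hsleP, hfac⟩ := pfacts l E hl hE
  have hfull := integrable_full l E hl hE
  set p := Real.sqrt (l ^ 2 - Real.sqrt (l ^ 4 + 4 * E)) with hpdef
  set P := Real.sqrt (l ^ 2 + Real.sqrt (l ^ 4 + 4 * E)) with hPdef
  have hl2 : (0:ℝ) < l ^ 2 := by positivity
  have hd : (0:ℝ) < Real.sqrt (l ^ 2) / 2 := by
    have : (0:ℝ) < Real.sqrt (l ^ 2) := Real.sqrt_pos.mpr hl2
    linarith
  set b := p + Real.sqrt (l ^ 2) / 2 with hb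
  have hpb : p ≤ b := by simp only [hb]; linarith
  have hbP : b < P := by
    have : b < Real.sqrt (l ^ 2) := by simp only [hb]; linarith
    linarith
  have hsub1 : Set.uIcc p b ⊆ Set.uIcc p P := by
    rw [Set.uIcc_of_le hpb, Set.uIcc_of_le (by linarith : p ≤ P)]
    exact Set.Icc_subset_Icc le_rfl hbP.le
  have hsub2 : Set.uIcc b P ⊆ Set.uIcc p P := by
    rw [Set.uIcc_of_le hbP.le, Set.uIcc_of_le (by linarith : p ≤ P)]
    exact Set.Icc_subset_Icc hpb le_rfl
  have hint1 := hfull.mono_set hsub1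
  have hint2 := hfull.mono_set hsub2
  have hcpos : (0:ℝ) < Real.sqrt (l ^ 2 / 2) := Real.sqrt_pos.mpr (by linarith)
  have hgint : IntervalIntegrable (fun x : ℝ => (Real.sqrt (l ^ 2 / 2))⁻¹ * (1 / x))
      volume p b := by
    apply ContinuousOn.intervalIntegrable
    refine continuousOn_const.mul (continuousOn_const.div continuousOn_id ?_)
    intro x hx
    rw [Set.uIcc_of_le hpb] at hx
    exact ne_of_gt (lt_of_lt_of_le hp hx.1)
  have hmono : (∫ x in p..b, (Real.sqrt (l ^ 2 / 2))⁻¹ * (1 / x)) ≤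
      ∫ x in p..b, 1 / Real.sqrt (E - (x ^ 4 / 4 - l ^ 2 / 2 * x ^ 2)) := by
    refine intervalIntegral.integral_mono_ae_restrict hpb hgint hint1 ?_
    have hpne : ∀ᵐ x : ℝ ∂(volume.restrict (Set.Icc p b)), x ≠ p :=
      ae_restrict_of_ae (by refine ae_iff.mpr ?_; simp)
    filter_upwards [hpne, ae_restrict_of_forall_mem measurableSet_Icc
      (fun x (hx : x ∈ Set.Icc p b) => hx)] with x hxp hx
    have hx1 : p < x := lt_of_le_of_ne hx.1 (Ne.symm hxp)
    have hxpos : 0 < x := lt_trans hp hx1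
    have hxP : x < P := lt_of_le_of_lt hx.2 hbP
    have hPle : P ^ 2 ≤ 2 * l ^ 2 := by rw [hP2]; linarith
    have hAnn : 0 ≤ P ^ 2 - x ^ 2 := by nlinarith
    have hBnn : 0 ≤ x ^ 2 - p ^ 2 := by nlinarith
    have hub : E - (x ^ 4 / 4 - l ^ 2 / 2 * x ^ 2) ≤ l ^ 2 / 2 * x ^ 2 := by
      rw [hfac x]
      have hBle : x ^ 2 - p ^ 2 ≤ x ^ 2 := by nlinarith [sq_nonneg p]
      have : (P ^ 2 - x ^ 2) * (x ^ 2 - p ^ 2) ≤ (2 * l ^ 2) * x ^ 2 :=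
        calc (P ^ 2 - x ^ 2) * (x ^ 2 - p ^ 2) ≤ (2 * l ^ 2) * (x ^ 2 - p ^ 2) :=
              mul_le_mul_of_nonneg_right (by linarith) hBnn
          _ ≤ (2 * l ^ 2) * x ^ 2 := mul_le_mul_of_nonneg_left hBle (by positivity)
      linarith
    have hpos : 0 < E - (x ^ 4 / 4 - l ^ 2 / 2 * x ^ 2) := by
      rw [hfac x]
      have h1 : 0 < P ^ 2 - x ^ 2 := by nlinarith [lt_trans hp hpP]
      have h2 : 0 < x ^ 2 - p ^ 2 := by nlinarith
      positivity
    have hsq : Real.sqrt (E - (x ^ 4 / 4 - l ^ 2 / 2 * x ^ 2)) ≤ Real.sqrt (l ^ 2 / 2) * x := by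
      calc Real.sqrt (E - (x ^ 4 / 4 - l ^ 2 / 2 * x ^ 2)) ≤ Real.sqrt (l ^ 2 / 2 * x ^ 2) :=
            Real.sqrt_le_sqrt hub
        _ = Real.sqrt (l ^ 2 / 2) * x := by
            rw [Real.sqrt_mul (by positivity), Real.sqrt_sq hxpos.le]
    have hsqpos : 0 < Real.sqrt (E - (x ^ 4 / 4 - l ^ 2 / 2 * x ^ 2)) := Real.sqrt_pos.mpr hpos
    calc (Real.sqrt (l ^ 2 / 2))⁻¹ * (1 / x) = 1 / (Real.sqrt (l ^ 2 / 2) * x) := by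
          rw [one_div, one_div, mul_inv]
      _ ≤ 1 / Real.sqrt (E - (x ^ 4 / 4 - l ^ 2 / 2 * x ^ 2)) :=
          one_div_le_one_div_of_le hsqpos hsq
  have hgval : (∫ x in p..b, (Real.sqrt (l ^ 2 / 2))⁻¹ * (1 / x)) =
      (Real.sqrt (l ^ 2 / 2))⁻¹ * (Real.log b - Real.log p) := by
    rw [intervalIntegral.integral_const_mul, integral_one_div_of_pos hp (by linarith),
      Real.log_div (by linarith) (ne_of_gt hp)]
  have h1 : (Real.sqrt (l ^ 2 / 2))⁻¹ * (Real.log b - Real.log p) ≤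
      ∫ x in p..b, 1 / Real.sqrt (E - (x ^ 4 / 4 - l ^ 2 / 2 * x ^ 2)) := by
    rw [← hgval]; exact hmono
  refine ⟨h1, ?_⟩
  have hsplit : (∫ x in p..b, 1 / Real.sqrt (E - (x ^ 4 / 4 - l ^ 2 / 2 * x ^ 2))) +
      (∫ x in b..P, 1 / Real.sqrt (E - (x ^ 4 / 4 - l ^ 2 / 2 * x ^ 2))) =
      ∫ x in p..P, 1 / Real.sqrt (E - (x ^ 4 / 4 - l ^ 2 / 2 * x ^ 2)) :=
    intervalIntegral.integral_add_adjacent_intervals hint1 hint2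
  have hn1 : 0 ≤ ∫ x in p..b, 1 / Real.sqrt (E - (x ^ 4 / 4 - l ^ 2 / 2 * x ^ 2)) :=
    intervalIntegral.integral_nonneg hpb (fun x _ => by positivity)
  have hn2 : 0 ≤ ∫ x in b..P, 1 / Real.sqrt (E - (x ^ 4 / 4 - l ^ 2 / 2 * x ^ 2)) :=
    intervalIntegral.integral_nonneg hbP.le (fun x _ => by positivity)
  linarith


/-- With `F(κ) = κ⁴/4 - λ²κ²/2`, `κ_m(E) = √(λ² - √(λ⁴+4E))` and
`κ_M(E) = √(λ² + √(λ⁴+4E))` for `E ∈ (-λ⁴/4, 0)`, for some suitable fixed small `ε > 0`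
the contribution `∫_{κ_m}^{κ_m + ε/2} dκ/√(E - F(κ))` tends to `+∞` as `E ↑ 0`;
in particular the period `L(E) = 2∫_{κ_m}^{κ_M} dκ/√(E - F(κ))` tends to `+∞` as `E ↑ 0`. -/
theorem period_diverges_at_zero (l : ℝ) (hl : l ≠ 0) :
    (∃ ε > (0 : ℝ), Tendsto (fun E : ℝ =>
        ∫ x in (Real.sqrt (l ^ 2 - Real.sqrt (l ^ 4 + 4 * E)))..
            (Real.sqrt (l ^ 2 - Real.sqrt (l ^ 4 + 4 * E)) + ε / 2),
          1 / Real.sqrt (E - (x ^ 4 / 4 - l ^ 2 / 2 * x ^ 2)))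
      (nhdsWithin 0 (Set.Ioo (-l ^ 4 / 4) 0)) atTop) ∧
    Tendsto (fun E : ℝ =>
        2 * ∫ x in (Real.sqrt (l ^ 2 - Real.sqrt (l ^ 4 + 4 * E)))..
            (Real.sqrt (l ^ 2 + Real.sqrt (l ^ 4 + 4 * E))),
          1 / Real.sqrt (E - (x ^ 4 / 4 - l ^ 2 / 2 * x ^ 2)))
      (nhdsWithin 0 (Set.Ioo (-l ^ 4 / 4) 0)) atTop := by
  have hl2 : (0:ℝ) < l ^ 2 := by positivity
  have hsA0 : 0 < Real.sqrt (l ^ 2) := Real.sqrt_pos.mpr hl2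
  set F := nhdsWithin (0:ℝ) (Set.Ioo (-l ^ 4 / 4) 0) with hF
  have hcont : Tendsto (fun E : ℝ => Real.sqrt (l ^ 2 - Real.sqrt (l ^ 4 + 4 * E)))
      (nhds 0) (nhds 0) := by
    have hc : Continuous fun E : ℝ => Real.sqrt (l ^ 2 - Real.sqrt (l ^ 4 + 4 * E)) := by
      fun_prop
    have h0 : Real.sqrt (l ^ 2 - Real.sqrt (l ^ 4)) = 0 := by
      rw [show l ^ 4 = (l ^ 2) ^ 2 by ring, Real.sqrt_sq hl2.le, sub_self, Real.sqrt_zero]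
    simpa [h0] using hc.tendsto 0
  have hkm : Tendsto (fun E : ℝ => Real.sqrt (l ^ 2 - Real.sqrt (l ^ 4 + 4 * E)))
      F (nhds 0) := hcont.mono_left nhdsWithin_le_nhds
  have hmem : ∀ᶠ E in F, E ∈ Set.Ioo (-l ^ 4 / 4) 0 := eventually_mem_nhdsWithin
  have hpos : ∀ᶠ E in F, 0 < Real.sqrt (l ^ 2 - Real.sqrt (l ^ 4 + 4 * E)) := by
    filter_upwards [hmem] with E hE
    exact (pfacts l E hl hE).2.2.1
  have hkmIoi : Tendsto (fun E : ℝ => Real.sqrt (l ^ 2 - Real.sqrt (l ^ 4 + 4 * E)))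
      F (nhdsWithin 0 (Set.Ioi 0)) := tendsto_nhdsWithin_iff.mpr ⟨hkm, hpos⟩
  have hlog1 : Tendsto (fun E : ℝ => Real.log (Real.sqrt (l ^ 2 - Real.sqrt (l ^ 4 + 4 * E))))
      F atBot := Real.tendsto_log_nhdsGT_zero.comp hkmIoi
  have hlog2 : Tendsto (fun E : ℝ =>
      Real.log (Real.sqrt (l ^ 2 - Real.sqrt (l ^ 4 + 4 * E)) + Real.sqrt (l ^ 2) / 2))
      F (nhds (Real.log (Real.sqrt (l ^ 2) / 2))) := by
    have haux : Tendsto (fun E : ℝ =>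
        Real.sqrt (l ^ 2 - Real.sqrt (l ^ 4 + 4 * E)) + Real.sqrt (l ^ 2) / 2)
        F (nhds (Real.sqrt (l ^ 2) / 2)) := by
      simpa using hkm.add_const (Real.sqrt (l ^ 2) / 2)
    exact haux.log (by positivity)
  have hphi : Tendsto (fun E : ℝ => (Real.sqrt (l ^ 2 / 2))⁻¹ *
      (Real.log (Real.sqrt (l ^ 2 - Real.sqrt (l ^ 4 + 4 * E)) + Real.sqrt (l ^ 2) / 2) -
        Real.log (Real.sqrt (l ^ 2 - Real.sqrt (l ^ 4 + 4 * E))))) F atTop := by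
    apply Tendsto.const_mul_atTop
    · have : (0:ℝ) < Real.sqrt (l ^ 2 / 2) := Real.sqrt_pos.mpr (by linarith)
      positivity
    · have := Tendsto.add_atTop hlog2 (tendsto_neg_atBot_atTop.comp hlog1)
      simpa [sub_eq_add_neg] using this
  have hsmall : ∀ᶠ E in F, Real.sqrt (l ^ 2 - Real.sqrt (l ^ 4 + 4 * E)) <
      Real.sqrt (l ^ 2) / 2 := hkm.eventually_lt_const (by positivity)
  constructor
  · refine ⟨Real.sqrt (l ^ 2), hsA0, ?_⟩
    refine tendsto_atTop_mono' F ?_ hphi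
    filter_upwards [hmem, hsmall] with E hE hs
    exact (pbound l E hl hE hs).1
  · refine tendsto_atTop_mono' F ?_ hphi
    filter_upwards [hmem, hsmall] with E hE hs
    exact (pbound l E hl hE hs).2
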